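/- (Marsden identity for truncated powers.) Let θ_ℓ (m+1 ≤ ℓ ≤ n) be an interior knot of Θ with θ_ℓ > θ_{ℓ−1} and multiplicity μ in Θ. Then for every integer 0 ≤ ν ≤ μ−1 and every x ∈ [a,b): binom(m−1,ν)·(θ_ℓ − x)_+^{m−1−ν} = Σ_{k=1}^{ℓ−m+ν} σ_{m−1−ν}(θ_ℓ−θ_{k+1},…,θ_ℓ−θ_{k+m−1})·N_{m,k}(x). -/

import Mathlib

open scoped BigOperators
open MeasureTheory Matrix

noncomputable def omegaB (θ : ℕ → ℝ) (j k : ℕ) (x : ℝ) : ℝ :=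
  if θ k < θ (k + j) then (x - θ k) / (θ (k + j) - θ k) else 0

noncomputable def Nspl (θ : ℕ → ℝ) : ℕ → ℕ → ℝ → ℝ
  | 0, _, _ => 0
  | 1, k, x => if θ k ≤ x ∧ x < θ (k + 1) then 1 else 0
  | j + 2, k, x =>
      omegaB θ (j + 1) k x * Nspl θ (j + 1) k x
        + (1 - omegaB θ (j + 1) (k + 1) x) * Nspl θ (j + 1) (k + 1) x

noncomputable def Gram (θ : ℕ → ℝ) (a b : ℝ) (m n : ℕ) : Matrix (Fin n) (Fin n) ℝ :=
  Matrix.of fun j k => ∫ x in a..b, Nspl θ m (j.1 + 1) x * Nspl θ m (k.1 + 1) x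

noncomputable def Dmat (θ : ℕ → ℝ) (ord p q : ℕ) : Matrix (Fin p) (Fin q) ℝ :=
  Matrix.of fun k j =>
    if j.1 = k.1 then (ord : ℝ) / (θ (k.1 + 1 + ord) - θ (k.1 + 1))
    else if j.1 = k.1 + 1 then -((ord : ℝ) / (θ (k.1 + 2 + ord) - θ (k.1 + 2)))
    else 0

noncomputable def Dprod (θ : ℕ → ℝ) (m n : ℕ) : (ν : ℕ) → Matrix (Fin (n - ν - 1)) (Fin n) ℝ
  | 0 => Dmat θ m (n - 1) n
  | ν + 1 => Dmat θ (m + ν + 1) (n - (ν + 1) - 1) (n - ν - 1) * Dprod θ m n ν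

noncomputable def DprodFull (θ : ℕ → ℝ) (m n : ℕ) (hm : 1 ≤ m) :
    Matrix (Fin (n - m)) (Fin n) ℝ :=
  Matrix.reindex (finCongr (by omega : n - (m - 1) - 1 = n - m)) (Equiv.refl _)
    (Dprod θ m n (m - 1))

noncomputable def knotMult (θ : ℕ → ℝ) (N ℓ : ℕ) : ℕ :=
  ((Finset.Icc 1 N).filter fun i => θ i = θ ℓ).card

structure IsOpenKnot (θ : ℕ → ℝ) (a b : ℝ) (m n : ℕ) : Prop where
  mono : ∀ i, 1 ≤ i → i < n + m → θ i ≤ θ (i + 1)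
  left : ∀ i, 1 ≤ i → i ≤ m → θ i = a
  right : ∀ i, n + 1 ≤ i → i ≤ n + m → θ i = b
  intMult : ∀ k, m + 1 ≤ k → k ≤ n → knotMult θ (n + m) k ≤ m - 1

noncomputable def esymmF (r : ℕ) (s : Finset ℕ) (y : ℕ → ℝ) : ℝ :=
  ∑ t ∈ s.powersetCard r, ∏ i ∈ t, y i

noncomputable def cVec (θ : ℕ → ℝ) (m n ℓ ν : ℕ) : Fin n → ℝ :=
  fun k =>
    if k.1 + 1 ≤ ℓ - m + ν then
      esymmF (m - 1 - ν) (Finset.Icc (k.1 + 2) (k.1 + m)) (fun i => θ ℓ - θ i)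
        / ((m - 1).choose ν : ℝ)
    else 0

noncomputable def Fpoly (ν : ℕ) (s : Finset ℕ) (y : ℕ → ℝ) : ℝ :=
  (2 ^ ν * (ν.factorial : ℝ))⁻¹ *
    ∑ f ∈ (Fintype.piFinset fun _ : Fin (2 * ν) => s).filter (fun f => Function.Injective f),
      ∏ i : Fin ν,
        (y (f ⟨i.1, by have := i.2; omega⟩) - y (f ⟨ν + i.1, by have := i.2; omega⟩)) ^ 2

noncomputable def uCoef (θ : ℕ → ℝ) (m ν k : ℕ) : ℝ :=
  ((m + ν : ℕ) : ℝ) / (θ (k + m + ν) - θ k) * Fpoly ν (Finset.Icc (k + 1) (k + m + ν - 1)) θ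

noncomputable def Smat (θ : ℕ → ℝ) (m n : ℕ) : ℕ → Matrix (Fin n) (Fin n) ℝ
  | 0 => Matrix.diagonal fun k : Fin n => uCoef θ m 0 (k.1 + 1)
  | ν + 1 => Smat θ m n ν +
      (Dprod θ m n ν)ᵀ *
        Matrix.diagonal (fun k : Fin (n - ν - 1) => uCoef θ m (ν + 1) (k.1 + 1)) *
        Dprod θ m n ν
noncomputable def alpha2 (θ : ℕ → ℝ) (n j : ℕ) : ℝ :=
  if 1 ≤ j ∧ j ≤ n - 1 then (θ (j + 2) - θ (j + 1)) ^ 2 / (θ (j + 3) - θ j) else 0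

noncomputable def beta2 (θ : ℕ → ℝ) (j : ℕ) : ℝ :=
  -(2 * (θ (j + 2) - θ (j + 1)) ^ 2) /
    ((θ (j + 2) - θ j) * (θ (j + 3) - θ j) * (θ (j + 3) - θ (j + 1)))

/-- The approximate-dual matrix `S` for `m = 2` (symmetric tridiagonal). -/
noncomputable def S2 (θ : ℕ → ℝ) (n : ℕ) : Matrix (Fin n) (Fin n) ℝ :=
  Matrix.of fun i k =>
    if k.1 = i.1 then
      2 / (θ (i.1 + 3) - θ (i.1 + 1))
        + 2 * (alpha2 θ n i.1 + alpha2 θ n (i.1 + 1)) / (θ (i.1 + 3) - θ (i.1 + 1)) ^ 2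
    else if k.1 = i.1 + 1 then beta2 θ (i.1 + 1)
    else if i.1 = k.1 + 1 then beta2 θ (k.1 + 1)
    else 0

/-- The explicit matrix `Z` for `m = 2` (lower triangular, three nonzero diagonals). -/
noncomputable def Zmat2 (θ : ℕ → ℝ) (n : ℕ) : Matrix (Fin n) (Fin (n - 2)) ℝ :=
  Matrix.of fun i j =>
    if i.1 = j.1 then
      (θ (j.1 + 3) - θ (j.1 + 2)) * (θ (j.1 + 4) - θ (j.1 + 3)) ^ 2
        / (18 * (θ (j.1 + 4) - θ (j.1 + 2)))
    else if i.1 = j.1 + 1 then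
      -((θ (j.1 + 3) - θ (j.1 + 2)) * (θ (j.1 + 4) - θ (j.1 + 3)) / 18)
    else if i.1 = j.1 + 2 then
      (θ (j.1 + 3) - θ (j.1 + 2)) ^ 2 * (θ (j.1 + 4) - θ (j.1 + 3))
        / (18 * (θ (j.1 + 4) - θ (j.1 + 2)))
    else 0

/-- The approximate-dual matrix `S = U₀ + D₃ᵀ U₁ D₃ + D₃ᵀ D₄ᵀ U₂ D₄ D₃` for `m = 3`. -/
noncomputable def S3 (θ : ℕ → ℝ) (n : ℕ) : Matrix (Fin n) (Fin n) ℝ :=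
  Matrix.diagonal (fun k : Fin n => uCoef θ 3 0 (k.1 + 1))
    + (Dmat θ 3 (n - 1) n)ᵀ *
        Matrix.diagonal (fun k : Fin (n - 1) => uCoef θ 3 1 (k.1 + 1)) * Dmat θ 3 (n - 1) n
    + (Dmat θ 4 (n - 2) (n - 1) * Dmat θ 3 (n - 1) n)ᵀ *
        Matrix.diagonal (fun k : Fin (n - 2) => uCoef θ 3 2 (k.1 + 1)) *
        (Dmat θ 4 (n - 2) (n - 1) * Dmat θ 3 (n - 1) n)


section MarsdenAux

lemma auxNleft (θ : ℕ → ℝ) (x : ℝ) :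
    ∀ j k, (∀ i, k ≤ i → i < k + j → θ i ≤ θ (i + 1)) → x < θ k → Nspl θ j k x = 0
  | 0, _, _, _ => rfl
  | 1, _, _, hx => by
      simp only [Nspl, ite_eq_right_iff]
      rintro ⟨h1, -⟩; linarith
  | (j+2), k, hm, hx => by
      have h1 : Nspl θ (j+1) k x = 0 :=
        auxNleft θ x (j+1) k (fun i hi hi' => hm i hi (by omega)) hx
      have hk : θ k ≤ θ (k+1) := hm k le_rfl (by omega)
      have h2 : Nspl θ (j+1) (k+1) x = 0 :=
        auxNleft θ x (j+1) (k+1) (fun i hi hi' => hm i (by omega) (by omega))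
          (lt_of_lt_of_le hx hk)
      simp [Nspl, h1, h2]

lemma auxNright (θ : ℕ → ℝ) (x : ℝ) :
    ∀ j k, (∀ i, k ≤ i → i < k + j → θ i ≤ θ (i + 1)) → θ (k + j) ≤ x → Nspl θ j k x = 0
  | 0, _, _, _ => rfl
  | 1, _, _, hx => by
      simp only [Nspl, ite_eq_right_iff]
      rintro ⟨-, h2⟩; linarith
  | (j+2), k, hm, hx => by
      have hstep : θ (k + (j+1)) ≤ θ (k + (j+2)) := by
        have := hm (k + j + 1) (by omega) (by omega)
        convert this using 2 <;> omega
      have h1 : Nspl θ (j+1) k x = 0 :=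
        auxNright θ x (j+1) k (fun i hi hi' => hm i hi (by omega)) (le_trans hstep hx)
      have h2 : Nspl θ (j+1) (k+1) x = 0 :=
        auxNright θ x (j+1) (k+1) (fun i hi hi' => hm i (by omega) (by omega))
          (by convert hx using 2; omega)
      simp [Nspl, h1, h2]

lemma auxNspl_succ (θ : ℕ → ℝ) (j k : ℕ) (x : ℝ) (hj : 1 ≤ j) :
    Nspl θ (j+1) k x = omegaB θ j k x * Nspl θ j k x
      + (1 - omegaB θ j (k+1) x) * Nspl θ j (k+1) x := by
  obtain ⟨j', rfl⟩ : ∃ j', j = j'+1 := ⟨j-1, by omega⟩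
  rfl

lemma auxThetaChain (θ : ℕ → ℝ) (N : ℕ) (hmono : ∀ i, 1 ≤ i → i < N → θ i ≤ θ (i + 1)) :
    ∀ i j, 1 ≤ i → i ≤ j → j ≤ N → θ i ≤ θ j := by
  intro i j hi hij hjN
  induction j with
  | zero => omega
  | succ j ih =>
    rcases Nat.lt_or_ge i (j+1) with h | h
    · exact le_trans (ih (by omega) (by omega)) (hmono j (by omega) (by omega))
    · have : i = j + 1 := by omega
      subst this; rfl

lemma auxPartition1 (θ : ℕ → ℝ) (N : ℕ) (hN : 2 ≤ N) (x : ℝ)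
    (hmono : ∀ i, 1 ≤ i → i < N → θ i ≤ θ (i + 1))
    (hx1 : θ 1 ≤ x) (hx2 : x < θ N) :
    ∑ k ∈ Finset.Icc 1 (N - 1), Nspl θ 1 k x = 1 := by
  have hmono' := auxThetaChain θ N hmono
  set s := (Finset.Icc 1 (N - 1)).filter (fun k => θ k ≤ x) with hs
  have hne : s.Nonempty := ⟨1, by simp [hs]; exact ⟨by omega, hx1⟩⟩
  set k₀ := s.max' hne with hk₀
  have hk₀mem : k₀ ∈ s := s.max'_mem hne
  have hk₀Icc : k₀ ∈ Finset.Icc 1 (N-1) := (Finset.mem_filter.mp hk₀mem).1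
  have hk₀le : θ k₀ ≤ x := (Finset.mem_filter.mp hk₀mem).2
  have hk₀r : 1 ≤ k₀ ∧ k₀ ≤ N - 1 := by simpa using hk₀Icc
  have hlt : x < θ (k₀ + 1) := by
    rcases Nat.lt_or_ge k₀ (N-1) with h | h
    · by_contra hcon
      push_neg at hcon
      have : k₀ + 1 ∈ s := Finset.mem_filter.mpr ⟨by simp; omega, hcon⟩
      have := s.le_max' _ this
      omega
    · have : k₀ + 1 = N := by omega
      rw [this]; exact hx2
  rw [Finset.sum_eq_single k₀]
  · simp [Nspl, hk₀le, hlt]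
  · intro k hk hne'
    simp only [Finset.mem_Icc] at hk
    rcases Nat.lt_or_ge k k₀ with h | h
    · have : θ (k+1) ≤ θ k₀ := hmono' (k+1) k₀ (by omega) (by omega) (by omega)
      simp only [Nspl, ite_eq_right_iff]
      rintro ⟨-, h2⟩; linarith
    · have hgt : k₀ + 1 ≤ k := by omega
      have : θ (k₀+1) ≤ θ k := hmono' (k₀+1) k (by omega) hgt (by omega)
      simp only [Nspl, ite_eq_right_iff]
      rintro ⟨h1, -⟩; linarith
  · intro h; exact absurd hk₀Icc h

lemma auxMarsden (θ : ℕ → ℝ) (a b : ℝ) (m n : ℕ) (hm : 2 ≤ m) (hmn : m ≤ n)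
    (hθ : IsOpenKnot θ a b m n) (x : ℝ) (hx1 : a ≤ x) (hx2 : x < b) :
    ∀ j, 1 ≤ j → j ≤ m → ∀ t : ℝ,
      ∑ k ∈ Finset.Icc 1 (n + m - j),
        (∏ i ∈ Finset.Icc (k+1) (k+j-1), (t - θ i)) * Nspl θ j k x = (t - x) ^ (j - 1) := by
  have hchain := auxThetaChain θ (n+m) hθ.mono
  intro j hj
  induction j, hj using Nat.le_induction with
  | base =>
    intro _ t
    have h1 : θ 1 = a := hθ.left 1 le_rfl (by omega)
    have h2 : θ (n+m) = b := hθ.right (n+m) (by omega) le_rfl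
    have := auxPartition1 θ (n+m) (by omega) x hθ.mono (h1 ▸ hx1) (h2 ▸ hx2)
    simpa using this
  | succ j hj1 ih =>
    intro hjm t
    have hjm' : j ≤ m := by omega
    set K := n + m - (j+1) with hK
    have hKn : K + 1 = n + m - j := by omega
    have e1 : ∑ k ∈ Finset.Icc 1 K,
        (∏ i ∈ Finset.Icc (k+1) (k+(j+1)-1), (t - θ i)) * Nspl θ (j+1) k x
        = (∑ k ∈ Finset.Icc 1 K,
            (∏ i ∈ Finset.Icc (k+1) (k+j), (t - θ i)) * (omegaB θ j k x * Nspl θ j k x))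
          + ∑ k ∈ Finset.Icc 1 K,
            (∏ i ∈ Finset.Icc (k+1) (k+j), (t - θ i))
              * ((1 - omegaB θ j (k+1) x) * Nspl θ j (k+1) x) := by
      rw [← Finset.sum_add_distrib]
      apply Finset.sum_congr rfl
      intro k hk
      have : k + (j+1) - 1 = k + j := by omega
      rw [this, auxNspl_succ θ j k x (by omega)]
      ring
    have e2 : ∑ k ∈ Finset.Icc 1 K,
          (∏ i ∈ Finset.Icc (k+1) (k+j), (t - θ i))
            * ((1 - omegaB θ j (k+1) x) * Nspl θ j (k+1) x)
        = ∑ k ∈ Finset.Icc 2 (K+1),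
          (∏ i ∈ Finset.Icc k (k+j-1), (t - θ i))
            * ((1 - omegaB θ j k x) * Nspl θ j k x) := by
      apply Finset.sum_nbij' (fun k => k + 1) (fun k => k - 1)
      · intro k hk; simp only [Finset.mem_Icc] at *; omega
      · intro k hk; simp only [Finset.mem_Icc] at *; omega
      · intro k hk; omega
      · intro k hk; simp only [Finset.mem_Icc] at hk; omega
      · intro k hk
        have h1 : k + 1 + j - 1 = k + j := by omega
        rw [h1]
    have ext1 : ∑ k ∈ Finset.Icc 1 K,
          (∏ i ∈ Finset.Icc (k+1) (k+j), (t - θ i)) * (omegaB θ j k x * Nspl θ j k x)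
        = ∑ k ∈ Finset.Icc 1 (K+1),
          (∏ i ∈ Finset.Icc (k+1) (k+j), (t - θ i)) * (omegaB θ j k x * Nspl θ j k x) := by
      apply Finset.sum_subset
      · intro k hk; simp only [Finset.mem_Icc] at *; omega
      · intro k hk hk'
        have hk1 : k = K + 1 := by
          simp only [Finset.mem_Icc] at *; omega
        subst hk1
        have hKb : θ (K+1) = b := hθ.right (K+1) (by omega) (by omega)
        have : Nspl θ j (K+1) x = 0 :=
          auxNleft θ x j (K+1) (fun i hi hi' => hθ.mono i (by omega) (by omega))
            (by rw [hKb]; exact hx2)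
        simp [this]
    have ext2 : ∑ k ∈ Finset.Icc 2 (K+1),
          (∏ i ∈ Finset.Icc k (k+j-1), (t - θ i)) * ((1 - omegaB θ j k x) * Nspl θ j k x)
        = ∑ k ∈ Finset.Icc 1 (K+1),
          (∏ i ∈ Finset.Icc k (k+j-1), (t - θ i)) * ((1 - omegaB θ j k x) * Nspl θ j k x) := by
      apply Finset.sum_subset
      · intro k hk; simp only [Finset.mem_Icc] at *; omega
      · intro k hk hk'
        have hk1 : k = 1 := by simp only [Finset.mem_Icc] at *; omega
        subst hk1
        have hja : θ (1+j) = a := hθ.left (1+j) (by omega) (by omega)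
        have : Nspl θ j 1 x = 0 :=
          auxNright θ x j 1 (fun i hi hi' => hθ.mono i (by omega) (by omega))
            (by rw [hja]; exact hx1)
        simp [this]
    have e3 : ∀ k ∈ Finset.Icc 1 (K+1),
        (∏ i ∈ Finset.Icc (k+1) (k+j), (t - θ i)) * (omegaB θ j k x * Nspl θ j k x)
          + (∏ i ∈ Finset.Icc k (k+j-1), (t - θ i)) * ((1 - omegaB θ j k x) * Nspl θ j k x)
        = (t - x) * ((∏ i ∈ Finset.Icc (k+1) (k+j-1), (t - θ i)) * Nspl θ j k x) := by
      intro k hk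
      simp only [Finset.mem_Icc] at hk
      rcases eq_or_ne (Nspl θ j k x) 0 with hN | hN
      · simp [hN]
      have hlt : θ k < θ (k + j) := by
        rcases lt_or_ge (θ k) (θ (k+j)) with h | h
        · exact h
        · exfalso
          have hle : θ k ≤ θ (k+j) := hchain k (k+j) (by omega) (by omega) (by omega)
          have heq : θ (k+j) = θ k := le_antisymm h hle
          rcases lt_or_ge x (θ k) with h2 | h2
          · exact hN (auxNleft θ x j k (fun i hi hi' => hθ.mono i (by omega) (by omega)) h2)
          · exact hN (auxNright θ x j k (fun i hi hi' => hθ.mono i (by omega) (by omega))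
              (heq ▸ h2))
      have hω : omegaB θ j k x = (x - θ k) / (θ (k+j) - θ k) := by
        simp [omegaB, hlt]
      have hp1 : ∏ i ∈ Finset.Icc (k+1) (k+j), (t - θ i)
          = (∏ i ∈ Finset.Icc (k+1) (k+j-1), (t - θ i)) * (t - θ (k+j)) := by
        have h1 : k + j = (k + j - 1) + 1 := by omega
        rw [h1, Finset.prod_Icc_succ_top (by omega)]
        first
        | rfl
        | (congr 2; omega)
      have hp2 : ∏ i ∈ Finset.Icc k (k+j-1), (t - θ i)
          = (t - θ k) * ∏ i ∈ Finset.Icc (k+1) (k+j-1), (t - θ i) := by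
        have hIns : Finset.Icc k (k+j-1) = insert k (Finset.Icc (k+1) (k+j-1)) := by
          ext i
          simp only [Finset.mem_Icc, Finset.mem_insert]
          omega
        rw [hIns, Finset.prod_insert (by simp)]
      rw [hω, hp1, hp2]
      have hd : θ (k+j) - θ k ≠ 0 := by linarith
      field_simp
      ring
    calc ∑ k ∈ Finset.Icc 1 (n + m - (j+1)),
          (∏ i ∈ Finset.Icc (k+1) (k+(j+1)-1), (t - θ i)) * Nspl θ (j+1) k x
        = ∑ k ∈ Finset.Icc 1 (K+1),
            ((∏ i ∈ Finset.Icc (k+1) (k+j), (t - θ i)) * (omegaB θ j k x * Nspl θ j k x)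
              + (∏ i ∈ Finset.Icc k (k+j-1), (t - θ i))
                  * ((1 - omegaB θ j k x) * Nspl θ j k x)) := by
          rw [Finset.sum_add_distrib, ← ext1, ← ext2, ← e2, ← e1]
      _ = ∑ k ∈ Finset.Icc 1 (K+1),
            (t - x) * ((∏ i ∈ Finset.Icc (k+1) (k+j-1), (t - θ i)) * Nspl θ j k x) :=
          Finset.sum_congr rfl e3
      _ = (t - x) * ∑ k ∈ Finset.Icc 1 (n+m-j),
            (∏ i ∈ Finset.Icc (k+1) (k+j-1), (t - θ i)) * Nspl θ j k x := by
          rw [← Finset.mul_sum, hKn]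
      _ = (t - x) ^ ((j+1) - 1) := by
          rw [ih hjm' t, ← pow_succ']
          congr 1
          omega

lemma auxProdEsymm (M : ℕ) (s : Finset ℕ) (hcard : s.card = M) (c : ℕ → ℝ) (u : ℝ) :
    ∏ i ∈ s, (c i + u) = ∑ j ∈ Finset.range (M + 1), esymmF (M - j) s c * u ^ j := by
  rw [Finset.prod_add, Finset.powerset_card_disjiUnion, Finset.sum_disjiUnion (h := Finset.pairwise_disjoint_powersetCard s |>.set_pairwise _), hcard]
  have h1 : ∀ r ∈ Finset.range (M+1),
      ∑ t ∈ Finset.powersetCard r s, ((∏ i ∈ t, c i) * ∏ i ∈ s \ t, u)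
        = esymmF r s c * u ^ (M - r) := by
    intro r hr
    rw [esymmF, Finset.sum_mul]
    apply Finset.sum_congr rfl
    intro t ht
    rw [Finset.mem_powersetCard] at ht
    rw [Finset.prod_const, Finset.card_sdiff_of_subset ht.1, hcard, ht.2]
  rw [Finset.sum_congr rfl h1]
  rw [← Finset.sum_range_reflect]
  apply Finset.sum_congr rfl
  intro j hj
  simp only [Finset.mem_range] at hj
  have h2 : M - (M - j) = j := by omega
  simp only [Nat.add_sub_cancel, h2]

lemma auxCoeffExtract (M : ℕ) (aco : ℕ → ℝ)
    (h : ∀ u : ℝ, ∑ j ∈ Finset.range M, aco j * u ^ j = 0) :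
    ∀ j < M, aco j = 0 := by
  intro j hj
  set p : Polynomial ℝ := ∑ i ∈ Finset.range M, Polynomial.C (aco i) * Polynomial.X ^ i with hp
  have hev : ∀ u : ℝ, p.eval u = 0 := by
    intro u
    simpa [hp, Polynomial.eval_finset_sum] using h u
  have hz : p = 0 := Polynomial.funext (fun u => by rw [hev u]; simp)
  have : p.coeff j = aco j := by
    rw [hp, Polynomial.finset_sum_coeff]
    simp only [Polynomial.coeff_C_mul, Polynomial.coeff_X_pow, mul_ite, mul_one, mul_zero]
    rw [Finset.sum_ite_eq (Finset.range M) j aco]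
    simp [hj]
  rw [← this, hz]
  simp

lemma auxKnotFlat (θ : ℕ → ℝ) (m n ℓ ν : ℕ) (hm : 2 ≤ m) (hℓ1 : m+1 ≤ ℓ) (hℓ2 : ℓ ≤ n)
    (hνm : ℓ + ν ≤ n + m)
    (hmono : ∀ i, 1 ≤ i → i < n + m → θ i ≤ θ (i + 1))
    (hsep : θ (ℓ-1) < θ ℓ) (hν : ν + 1 ≤ knotMult θ (n+m) ℓ) :
    ∀ i ≤ ν, θ (ℓ + i) = θ ℓ := by
  have hchain := auxThetaChain θ (n+m) hmono
  by_contra hcon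
  push_neg at hcon
  obtain ⟨i, hiν, hine⟩ := hcon
  classical
  have hex : ∃ i, i ≤ ν ∧ θ (ℓ + i) ≠ θ ℓ := ⟨i, hiν, hine⟩
  set i₀ := Nat.find hex with hi₀
  obtain ⟨hi₀ν, hi₀ne⟩ := Nat.find_spec hex
  have hgt : θ ℓ < θ (ℓ + i₀) := by
    have hle : θ ℓ ≤ θ (ℓ + i₀) := hchain ℓ (ℓ+i₀) (by omega) (by omega) (by omega)
    exact lt_of_le_of_ne hle (Ne.symm hi₀ne)
  have hsub : (Finset.Icc 1 (n+m)).filter (fun i => θ i = θ ℓ)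
      ⊆ Finset.Icc ℓ (ℓ + i₀ - 1) := by
    intro i hi
    simp only [Finset.mem_filter, Finset.mem_Icc] at hi ⊢
    obtain ⟨⟨h1, h2⟩, h3⟩ := hi
    constructor
    · by_contra h
      push_neg at h
      have : θ i ≤ θ (ℓ-1) := hchain i (ℓ-1) h1 (by omega) (by omega)
      linarith
    · by_contra h
      push_neg at h
      have : θ (ℓ + i₀) ≤ θ i := hchain (ℓ+i₀) i (by omega) (by omega) h2
      linarith
  have hcard := Finset.card_le_card hsub
  rw [Nat.card_Icc] at hcard
  unfold knotMult at hν
  omega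

end MarsdenAux

/-- Marsden identity for truncated powers. For an interior knot `θ_ℓ` of
multiplicity `μ` with `θ_ℓ > θ_{ℓ-1}`, `0 ≤ ν ≤ μ-1`, and `x ∈ [a,b)`:
`binom(m-1,ν)·(θ_ℓ - x)₊^{m-1-ν}
  = Σ_{k=1}^{ℓ-m+ν} σ_{m-1-ν}(θ_ℓ-θ_{k+1},…,θ_ℓ-θ_{k+m-1})·N_{m,k}(x)`. -/
theorem stmt15 (a b : ℝ) (hab : a < b) (m n : ℕ) (hm : 2 ≤ m) (hmn : m ≤ n)
    (θ : ℕ → ℝ) (hθ : IsOpenKnot θ a b m n)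
    (ℓ : ℕ) (hℓ1 : m + 1 ≤ ℓ) (hℓ2 : ℓ ≤ n) (hsep : θ (ℓ - 1) < θ ℓ)
    (ν : ℕ) (hν : ν + 1 ≤ knotMult θ (n + m) ℓ)
    (x : ℝ) (hx : x ∈ Set.Ico a b) :
    ((m - 1).choose ν : ℝ) * (max (θ ℓ - x) 0) ^ (m - 1 - ν) =
      ∑ k ∈ Finset.Icc 1 (ℓ - m + ν),
        esymmF (m - 1 - ν) (Finset.Icc (k + 1) (k + m - 1)) (fun i => θ ℓ - θ i) *
          Nspl θ m k x := by
  classical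
  obtain ⟨hax, hxb⟩ := hx
  have hchain := auxThetaChain θ (n+m) hθ.mono
  have hμ : knotMult θ (n+m) ℓ ≤ m - 1 := hθ.intMult ℓ hℓ1 hℓ2
  have hνm : ν + 1 ≤ m - 1 := le_trans hν hμ
  have hflat : ∀ i ≤ ν, θ (ℓ + i) = θ ℓ :=
    auxKnotFlat θ m n ℓ ν hm hℓ1 hℓ2 (by omega) hθ.mono hsep hν
  rcases lt_or_ge x (θ ℓ) with hxℓ | hxℓ
  · -- x < θ ℓ
    have hmax : max (θ ℓ - x) 0 = θ ℓ - x := max_eq_left (by linarith)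
    rw [hmax]
    have hM := auxMarsden θ a b m n hm hmn hθ x hax hxb m (by omega) le_rfl
    set c : ℕ → ℝ := fun i => θ ℓ - θ i with hc
    set A : ℕ → ℝ := fun j => ((m-1).choose j : ℝ) * (θ ℓ - x) ^ (m-1-j)
        - ∑ k ∈ Finset.Icc 1 n,
            esymmF (m-1-j) (Finset.Icc (k+1) (k+m-1)) c * Nspl θ m k x with hA
    have hz : ∀ j < m, A j = 0 := by
      apply auxCoeffExtract
      intro u
      have hMt := hM (u + θ ℓ)
      have hnm : n + m - m = n := by omega
      rw [hnm] at hMt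
      have lhs : ∑ j ∈ Finset.range m, (((m-1).choose j : ℝ) * (θ ℓ - x) ^ (m-1-j)) * u ^ j
          = ((u + θ ℓ) - x) ^ (m-1) := by
        have hbin := add_pow u (θ ℓ - x) (m-1)
        have h1 : m - 1 + 1 = m := by omega
        rw [h1] at hbin
        have : (u + (θ ℓ - x)) = ((u + θ ℓ) - x) := by ring
        rw [this] at hbin
        rw [hbin]
        apply Finset.sum_congr rfl
        intro j hj
        ring
      have rhs : ∀ k : ℕ, ∏ i ∈ Finset.Icc (k+1) (k+m-1), ((u + θ ℓ) - θ i)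
          = ∑ j ∈ Finset.range m, esymmF (m-1-j) (Finset.Icc (k+1) (k+m-1)) c * u ^ j := by
        intro k
        have hcard : (Finset.Icc (k+1) (k+m-1)).card = m - 1 := by
          rw [Nat.card_Icc]; omega
        have hpe := auxProdEsymm (m-1) _ hcard c u
        have hm1 : m - 1 + 1 = m := by omega
        rw [hm1] at hpe
        rw [← hpe]
        apply Finset.prod_congr rfl
        intro i hi
        simp only [hc]
        ring
      have swap : ∑ j ∈ Finset.range m,
            (∑ k ∈ Finset.Icc 1 n,
              esymmF (m-1-j) (Finset.Icc (k+1) (k+m-1)) c * Nspl θ m k x) * u ^ j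
          = ∑ k ∈ Finset.Icc 1 n,
              (∏ i ∈ Finset.Icc (k+1) (k+m-1), ((u + θ ℓ) - θ i)) * Nspl θ m k x := by
        simp only [Finset.sum_mul]
        rw [Finset.sum_comm]
        apply Finset.sum_congr rfl
        intro k hk
        rw [rhs k, Finset.sum_mul]
        apply Finset.sum_congr rfl
        intro j hj
        ring
      calc ∑ j ∈ Finset.range m, A j * u ^ j
          = (∑ j ∈ Finset.range m, (((m-1).choose j : ℝ) * (θ ℓ - x) ^ (m-1-j)) * u ^ j)
            - ∑ j ∈ Finset.range m,
                (∑ k ∈ Finset.Icc 1 n,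
                  esymmF (m-1-j) (Finset.Icc (k+1) (k+m-1)) c * Nspl θ m k x) * u ^ j := by
            rw [← Finset.sum_sub_distrib]
            apply Finset.sum_congr rfl
            intro j hj
            simp only [hA]
            ring
        _ = 0 := by rw [lhs, swap, hMt]; ring
    have hAν : ((m-1).choose ν : ℝ) * (θ ℓ - x) ^ (m-1-ν)
        = ∑ k ∈ Finset.Icc 1 n,
            esymmF (m-1-ν) (Finset.Icc (k+1) (k+m-1)) c * Nspl θ m k x := by
      have := hz ν (by omega)
      simp only [hA] at this
      linarith
    rw [hAν]
    symm
    apply Finset.sum_subset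
    · intro k hk
      simp only [Finset.mem_Icc] at *
      omega
    · intro k hk hk'
      simp only [Finset.mem_Icc] at hk hk'
      have hk2 : ℓ - m + ν + 1 ≤ k := by omega
      rcases Nat.lt_or_ge k ℓ with hkl | hkl
      · -- esymmF vanishes
        have hzero : esymmF (m-1-ν) (Finset.Icc (k+1) (k+m-1)) c = 0 := by
          rw [esymmF]
          apply Finset.sum_eq_zero
          intro t ht
          rw [Finset.mem_powersetCard] at ht
          obtain ⟨hts, htc⟩ := ht
          have hZsub : Finset.Icc ℓ (ℓ+ν) ⊆ Finset.Icc (k+1) (k+m-1) := by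
            intro i hi
            simp only [Finset.mem_Icc] at *
            omega
          have hmeet : ∃ i ∈ t, i ∈ Finset.Icc ℓ (ℓ+ν) := by
            by_contra hno
            push_neg at hno
            have hsub2 : t ⊆ (Finset.Icc (k+1) (k+m-1)) \ (Finset.Icc ℓ (ℓ+ν)) :=
              fun i hi => Finset.mem_sdiff.mpr ⟨hts hi, hno i hi⟩
            have hc1 := Finset.card_le_card hsub2
            rw [Finset.card_sdiff_of_subset hZsub] at hc1
            rw [Nat.card_Icc, Nat.card_Icc] at hc1
            omega
          obtain ⟨i, hit, hiZ⟩ := hmeet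
          apply Finset.prod_eq_zero hit
          simp only [Finset.mem_Icc] at hiZ
          have hfl := hflat (i - ℓ) (by omega)
          have hi' : ℓ + (i - ℓ) = i := by omega
          rw [hi'] at hfl
          simp [hc, hfl]
        rw [hzero, zero_mul]
      · -- Nspl vanishes
        have hN : Nspl θ m k x = 0 :=
          auxNleft θ x m k (fun i hi hi' => hθ.mono i (by omega) (by omega))
            (lt_of_lt_of_le hxℓ (hchain ℓ k (by omega) hkl (by omega)))
        rw [hN, mul_zero]
  · -- θ ℓ ≤ x
    have hmax : max (θ ℓ - x) 0 = 0 := max_eq_right (by linarith)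
    rw [hmax, zero_pow (by omega : m - 1 - ν ≠ 0), mul_zero]
    symm
    apply Finset.sum_eq_zero
    intro k hk
    simp only [Finset.mem_Icc] at hk
    have hfl : θ (ℓ + ν) = θ ℓ := hflat ν le_rfl
    have hkm : θ (k+m) ≤ θ (ℓ+ν) := hchain (k+m) (ℓ+ν) (by omega) (by omega) (by omega)
    have hN : Nspl θ m k x = 0 :=
      auxNright θ x m k (fun i hi hi' => hθ.mono i (by omega) (by omega))
        (by rw [hfl] at hkm; linarith)
    rw [hN, mul_zero]
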